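/- (Erdős–Rényi Borel–Cantelli lemma.) Let A_1, A_2, … be events in a probability space (Ω, ℱ, ℙ) satisfying ∑_{n=1}^∞ ℙ(A_n) = ∞. Then ℙ(limsup_{n→∞} A_n) ≥ limsup_{N→∞} (∑_{n=1}^N ℙ(A_n))² / ( 2 ∑_{1 ≤ m < n ≤ N} ℙ(A_m ∩ A_n) ). -/

import Mathlib

open MeasureTheory Filter

open scoped ENNReal Topology

open Finset in
lemma er_double_sum_split {M : Type*} [AddCommMonoid M] (g : ℕ → ℕ → M)
    (hsym : ∀ m n, g m n = g n m) (N : ℕ) :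
    ∑ m ∈ range N, ∑ n ∈ range N, g m n
      = (∑ m ∈ range N, g m m)
        + ((∑ m ∈ range N, ∑ n ∈ Ioo m N, g m n)
        + ∑ m ∈ range N, ∑ n ∈ Ioo m N, g m n) := by
  have h1 : ∀ m ∈ range N, ∑ n ∈ range N, g m n
      = (∑ n ∈ range m, g m n + g m m) + ∑ n ∈ Ioo m N, g m n := by
    intro m hm
    rw [mem_range] at hm
    rw [← Finset.sum_range_succ, show Finset.Ioo m N = Finset.Ico (m+1) N from rfl,
      Finset.range_eq_Ico, Finset.range_eq_Ico,
      Finset.sum_Ico_consecutive _ (Nat.zero_le _) (show m+1 ≤ N from hm)]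
  rw [Finset.sum_congr rfl h1, Finset.sum_add_distrib, Finset.sum_add_distrib]
  have h2 : ∑ m ∈ range N, ∑ n ∈ range m, g m n
      = ∑ m ∈ range N, ∑ n ∈ Ioo m N, g m n := by
    have := Finset.sum_Ico_Ico_comm' 0 N (fun i j => g j i)
    simp only [Finset.range_eq_Ico] at *
    rw [← this]
    refine Finset.sum_congr rfl fun m _ => Finset.sum_congr rfl fun n _ => (hsym n m)
  rw [h2]
  abel

lemma er_cauchy_schwarz {Ω : Type*} [MeasurableSpace Ω] (P : Measure Ω)
    (f : Ω → ℝ≥0∞) (hf : Measurable f) (U : Set Ω) (hU : MeasurableSet U)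
    (hsupp : ∀ x, x ∉ U → f x = 0) :
    (∫⁻ x, f x ∂P) ^ 2 ≤ (∫⁻ x, f x ^ 2 ∂P) * P U := by
  have hpq : Real.HolderConjugate 2 2 := Real.HolderConjugate.two_two
  have hg : Measurable (U.indicator (1 : Ω → ℝ≥0∞)) := measurable_one.indicator hU
  have key := ENNReal.lintegral_mul_le_Lp_mul_Lq P hpq hf.aemeasurable hg.aemeasurable
  simp only [Pi.mul_apply] at key
  have e1 : ∫⁻ a, f a * U.indicator (1 : Ω → ℝ≥0∞) a ∂P = ∫⁻ a, f a ∂P := by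
    refine lintegral_congr fun x => ?_
    by_cases hx : x ∈ U
    · simp [Set.indicator_of_mem hx]
    · simp [Set.indicator_of_notMem hx, hsupp x hx]
  have e2 : ∫⁻ a, U.indicator (1 : Ω → ℝ≥0∞) a ^ (2:ℝ) ∂P = P U := by
    rw [← lintegral_indicator_one hU]
    refine lintegral_congr fun x => ?_
    by_cases hx : x ∈ U
    · simp [Set.indicator_of_mem hx]
    · simp only [Set.indicator_of_notMem hx]
      exact ENNReal.zero_rpow_of_pos (by norm_num)
  have e3 : ∫⁻ a, f a ^ (2:ℝ) ∂P = ∫⁻ a, f a ^ 2 ∂P :=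
    lintegral_congr fun x => ENNReal.rpow_two _
  rw [e1, e2, e3] at key
  calc (∫⁻ x, f x ∂P) ^ 2
      ≤ ((∫⁻ a, f a ^ 2 ∂P) ^ (1/(2:ℝ)) * P U ^ (1/(2:ℝ))) ^ 2 := pow_le_pow_left' key 2
    _ = (∫⁻ x, f x ^ 2 ∂P) * P U := by
        rw [mul_pow, ← ENNReal.rpow_natCast (_ ^ (1/(2:ℝ))) 2,
          ← ENNReal.rpow_natCast (P U ^ (1/(2:ℝ))) 2,
          ← ENNReal.rpow_mul, ← ENNReal.rpow_mul]
        norm_num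

lemma er_cs_applied {Ω : Type*} [MeasurableSpace Ω] (P : Measure Ω)
    (A : ℕ → Set Ω) (hA : ∀ n, MeasurableSet (A n)) (s : Finset ℕ)
    (U : Set Ω) (hU : MeasurableSet U) (hsub : ∀ n ∈ s, A n ⊆ U) :
    (∑ n ∈ s, P (A n)) ^ 2 ≤ (∑ m ∈ s, ∑ n ∈ s, P (A m ∩ A n)) * P U := by
  classical
  set f : Ω → ℝ≥0∞ := fun x => ∑ n ∈ s, (A n).indicator 1 x with hf
  have hmeas : ∀ n ∈ s, Measurable fun x => (A n).indicator (1 : Ω → ℝ≥0∞) x :=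
    fun n _ => measurable_one.indicator (hA n)
  have hfmeas : Measurable f := Finset.measurable_sum s hmeas
  have hsupp : ∀ x, x ∉ U → f x = 0 := by
    intro x hx
    refine Finset.sum_eq_zero fun n hn => ?_
    exact Set.indicator_of_notMem (fun hxA => hx (hsub n hn hxA)) _
  have h1 : ∫⁻ x, f x ∂P = ∑ n ∈ s, P (A n) := by
    rw [hf]
    rw [lintegral_finset_sum s hmeas]
    exact Finset.sum_congr rfl fun n _ => lintegral_indicator_one (hA n)
  have h2 : ∫⁻ x, f x ^ 2 ∂P = ∑ m ∈ s, ∑ n ∈ s, P (A m ∩ A n) := by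
    have hpt : ∀ x, f x ^ 2 = ∑ m ∈ s, ∑ n ∈ s, (A m ∩ A n).indicator 1 x := by
      intro x
      rw [hf, sq, Finset.sum_mul_sum]
      refine Finset.sum_congr rfl fun m _ => Finset.sum_congr rfl fun n _ => ?_
      rw [Set.inter_indicator_one, Pi.mul_apply]
    simp only [hpt]
    rw [lintegral_finset_sum s (fun m _ => Finset.measurable_sum s
      (fun n _ => measurable_one.indicator ((hA m).inter (hA n))))]
    refine Finset.sum_congr rfl fun m _ => ?_
    rw [lintegral_finset_sum s (fun n _ => measurable_one.indicator ((hA m).inter (hA n)))]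
    exact Finset.sum_congr rfl fun n _ => lintegral_indicator_one ((hA m).inter (hA n))
  calc (∑ n ∈ s, P (A n)) ^ 2 = (∫⁻ x, f x ∂P) ^ 2 := by rw [h1]
    _ ≤ (∫⁻ x, f x ^ 2 ∂P) * P U := er_cauchy_schwarz P f hfmeas U hU hsupp
    _ = (∑ m ∈ s, ∑ n ∈ s, P (A m ∩ A n)) * P U := by rw [h2]


/-- The Erdős–Rényi version of the Borel–Cantelli lemma: if `∑ P(Aₙ) = ∞`, then
`P(limsup Aₙ) ≥ limsup_N (∑_{n<N} P(Aₙ))² / (2 ∑_{m<n<N} P(Aₘ ∩ Aₙ))`.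
All quantities are computed in `ℝ≥0∞`. -/
theorem erdos_renyi_borel_cantelli {Ω : Type*} [MeasurableSpace Ω]
    (P : Measure Ω) [IsProbabilityMeasure P] (A : ℕ → Set Ω)
    (hA : ∀ n, MeasurableSet (A n))
    (hdiv : ∑' n : ℕ, P (A n) = ⊤) :
    Filter.atTop.limsup (fun N : ℕ =>
        (∑ n ∈ Finset.range N, P (A n)) ^ 2 /
          (2 * ∑ m ∈ Finset.range N, ∑ n ∈ Finset.Ioo m N, P (A m ∩ A n))) ≤
      P (Filter.atTop.limsup A) := by
  classical
  -- notation
  set S : ℕ → ℝ≥0∞ := fun N => ∑ n ∈ Finset.range N, P (A n) with hSdef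
  set D : ℕ → ℝ≥0∞ :=
    fun N => 2 * ∑ m ∈ Finset.range N, ∑ n ∈ Finset.Ioo m N, P (A m ∩ A n) with hDdef
  set U : ℕ → Set Ω := fun k => ⋃ n, ⋃ (_ : k ≤ n), A n with hUdef
  have hUmeas : ∀ k, MeasurableSet (U k) :=
    fun k => MeasurableSet.iUnion fun n => MeasurableSet.iUnion fun _ => hA n
  have hUanti : Antitone U := by
    intro k l hkl
    exact Set.iUnion₂_subset fun n hn => Set.subset_iUnion₂ (s := fun n _ => A n) n (hkl.trans hn)
  have hSfin : ∀ N, S N ≠ ⊤ := fun N => (ENNReal.sum_lt_top.mpr fun n _ => measure_lt_top P _).ne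
  have hStop : Tendsto S atTop (𝓝 ⊤) := by
    have := ENNReal.tendsto_nat_tsum fun n => P (A n)
    rwa [hdiv] at this
  -- decomposition of the full double sum
  have hsplit : ∀ N, (∑ m ∈ Finset.range N, ∑ n ∈ Finset.range N, P (A m ∩ A n))
      = S N + D N := by
    intro N
    rw [er_double_sum_split (fun m n => P (A m ∩ A n))
      (fun m n => show P (A m ∩ A n) = P (A n ∩ A m) by rw [Set.inter_comm]) N]
    simp only [hSdef, hDdef, Set.inter_self, two_mul]
  -- Cauchy–Schwarz with k = 0
  have hbasic : ∀ N, S N ^ 2 ≤ S N + D N := by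
    intro N
    have := er_cs_applied P A hA (Finset.range N) Set.univ MeasurableSet.univ
      (fun n _ => Set.subset_univ _)
    rw [measure_univ, mul_one, hsplit N] at this
    exact this
  -- main claim: for every k, limsup ≤ P (U k)
  have main : ∀ k, Filter.atTop.limsup (fun N => S N ^ 2 / D N) ≤ P (U k) := by
    intro k
    -- suffices to bound by P (U k) + δ for every δ > 0
    refine ENNReal.le_of_forall_pos_le_add fun δ hδ hfin => ?_
    set ε : ℝ≥0∞ := min ((δ : ℝ≥0∞) / 7) 1 with hεdef
    have hε0 : 0 < ε := lt_min (ENNReal.div_pos (by exact_mod_cast hδ.ne') (by norm_num)) one_pos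
    have hε1 : ε ≤ 1 := min_le_right _ _
    have hεtop : ε ≠ ⊤ := (hε1.trans_lt ENNReal.one_lt_top).ne
    have h7ε : 7 * ε ≤ δ := by
      calc (7:ℝ≥0∞) * ε ≤ 7 * ((δ : ℝ≥0∞) / 7) := by
            exact mul_le_mul_right (min_le_left _ _) _
        _ = δ := ENNReal.mul_div_cancel' (by norm_num) (by norm_num)
    -- eventual bound
    have hc : max ((1+ε) * S k / ε) (1 + 1/ε) < ⊤ := by
      apply max_lt
      · exact ENNReal.div_lt_top (ENNReal.mul_ne_top (by simp [hεtop]) (hSfin k)) hε0.ne'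
      · exact ENNReal.add_lt_top.mpr ⟨ENNReal.one_lt_top,
          ENNReal.div_lt_top ENNReal.one_ne_top hε0.ne'⟩
    have hev : ∀ᶠ N in atTop, max ((1+ε) * S k / ε) (1 + 1/ε) < S N :=
      hStop.eventually (lt_mem_nhds hc)
    have hbound : ∀ᶠ N in atTop, S N ^ 2 / D N ≤ (1+ε)^3 * P (U k) := by
      filter_upwards [hev, eventually_ge_atTop k] with N hN hkN
      have hSc1 : (1+ε) * S k / ε ≤ S N := le_of_lt ((le_max_left _ _).trans_lt hN)
      have hSc2 : 1 + 1/ε ≤ S N := le_of_lt ((le_max_right _ _).trans_lt hN)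
      -- a = tail sum
      set a : ℝ≥0∞ := ∑ n ∈ Finset.Ico k N, P (A n) with hadef
      have hSa : S N = S k + a := by
        simp only [hSdef, hadef, Finset.range_eq_Ico]
        exact (Finset.sum_Ico_consecutive _ (Nat.zero_le k) hkN).symm
      -- step 1 : S N ≤ (1+ε) * a
      have hstep1 : S N ≤ (1+ε) * a := by
        have h1 : (1+ε) * S k ≤ ε * S N := by
          calc (1+ε) * S k = ε * ((1+ε) * S k / ε) :=
                (ENNReal.mul_div_cancel hε0.ne' hεtop).symm
            _ ≤ ε * S N := mul_le_mul_right hSc1 _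
        have h2 : S k + ε * S k ≤ ε * S k + ε * a := by
          calc S k + ε * S k = (1+ε) * S k := by ring
            _ ≤ ε * S N := h1
            _ = ε * S k + ε * a := by rw [hSa, mul_add]
        have h3 : S k ≤ ε * a := by
          rw [add_comm (ε * S k) (ε * a)] at h2
          exact (ENNReal.add_le_add_iff_right (ENNReal.mul_ne_top hεtop (hSfin k))).mp h2
        calc S N = S k + a := hSa
          _ ≤ ε * a + a := add_le_add_left h3 a
          _ = (1+ε) * a := by ring
      -- step 2 : S N ≤ ε * D N
      have hstep2 : S N ≤ ε * D N := by
        have h1 : S N * (1 + 1/ε) ≤ S N + D N := by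
          calc S N * (1 + 1/ε) ≤ S N * S N := mul_le_mul_right hSc2 _
            _ = S N ^ 2 := (sq (S N)).symm
            _ ≤ S N + D N := hbasic N
        have h2 : S N + S N * (1/ε) ≤ S N + D N := by
          calc S N + S N * (1/ε) = S N * (1 + 1/ε) := by ring
            _ ≤ S N + D N := h1
        have h3 : S N * (1/ε) ≤ D N := by
          exact (ENNReal.add_le_add_iff_left (hSfin N)).mp h2
        calc S N = S N * (1/ε) * ε := by
              rw [mul_assoc, one_div, ENNReal.inv_mul_cancel hε0.ne' hεtop, mul_one]
          _ ≤ D N * ε := mul_le_mul_left h3 ε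
          _ = ε * D N := mul_comm _ _
      -- Cauchy–Schwarz on the tail
      have hcs : a ^ 2 ≤ (S N + D N) * P (U k) := by
        have hsub : ∀ n ∈ Finset.Ico k N, A n ⊆ U k := by
          intro n hn
          exact Set.subset_iUnion₂ (s := fun n _ => A n) n (Finset.mem_Ico.mp hn).1
        refine (er_cs_applied P A hA (Finset.Ico k N) (U k) (hUmeas k) hsub).trans ?_
        refine mul_le_mul_left ?_ _
        refine le_trans ?_ (le_of_eq (hsplit N))
        have hss : Finset.Ico k N ⊆ Finset.range N := by
          rw [Finset.range_eq_Ico]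
          exact Finset.Ico_subset_Ico (Nat.zero_le _) le_rfl
        calc ∑ m ∈ Finset.Ico k N, ∑ n ∈ Finset.Ico k N, P (A m ∩ A n)
            ≤ ∑ m ∈ Finset.Ico k N, ∑ n ∈ Finset.range N, P (A m ∩ A n) :=
              Finset.sum_le_sum fun m _ => Finset.sum_le_sum_of_subset hss
          _ ≤ ∑ m ∈ Finset.range N, ∑ n ∈ Finset.range N, P (A m ∩ A n) :=
              Finset.sum_le_sum_of_subset hss
      -- combine
      have hfinal : S N ^ 2 ≤ ((1+ε)^3 * P (U k)) * D N := by
        calc S N ^ 2 ≤ ((1+ε) * a) ^ 2 := pow_le_pow_left' hstep1 2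
          _ = (1+ε)^2 * a^2 := by ring
          _ ≤ (1+ε)^2 * ((S N + D N) * P (U k)) := mul_le_mul_right hcs _
          _ ≤ (1+ε)^2 * ((ε * D N + D N) * P (U k)) := by
              exact mul_le_mul_right (mul_le_mul_left (add_le_add_left hstep2 _) _) _
          _ = ((1+ε)^3 * P (U k)) * D N := by ring
      exact ENNReal.div_le_of_le_mul hfinal
    have hls : Filter.atTop.limsup (fun N => S N ^ 2 / D N) ≤ (1+ε)^3 * P (U k) :=
      limsup_le_of_le (by isBoundedDefault) hbound
    refine hls.trans ?_
    have hcube : (1+ε)^3 ≤ 1 + 7 * ε := by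
      have hε2 : ε * ε ≤ ε := by
        calc ε * ε ≤ 1 * ε := mul_le_mul_left hε1 ε
          _ = ε := one_mul ε
      have hε3 : ε * ε * ε ≤ ε := by
        calc ε * ε * ε ≤ ε * 1 := mul_le_mul' hε2 hε1
          _ = ε := mul_one ε
      calc (1+ε)^3 = 1 + 3*ε + 3*(ε*ε) + ε*ε*ε := by ring
        _ ≤ 1 + 3*ε + 3*ε + ε := by
            gcongr
        _ ≤ 1 + 7 * ε := by
            rw [show (1:ℝ≥0∞) + 3*ε + 3*ε + ε = 1 + (3+3+1) * ε by ring]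
            norm_num
    calc (1+ε)^3 * P (U k) ≤ (1 + 7*ε) * P (U k) := mul_le_mul_left hcube _
      _ = P (U k) + 7*ε * P (U k) := by ring
      _ ≤ P (U k) + 7*ε * 1 := by gcongr; exact prob_le_one
      _ = P (U k) + 7*ε := by rw [mul_one]
      _ ≤ P (U k) + δ := add_le_add_right h7ε _
  -- conclude
  have hlim : P (Filter.atTop.limsup A) = ⨅ k, P (U k) := by
    have h1 : Filter.atTop.limsup A = ⋂ k, U k := by
      rw [limsup_eq_iInf_iSup_of_nat]
      simp only [hUdef, Set.iInf_eq_iInter, Set.iSup_eq_iUnion]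
    rw [h1]
    exact Directed.measure_iInter (fun k => (hUmeas k).nullMeasurableSet)
      (hUanti.directed_ge) ⟨0, measure_ne_top P _⟩
  rw [hlim]
  exact le_iInf main
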